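/- arXiv:2001.06128 — 3 statements merged into one kernel-verified Lean document; each statement's English description precedes it below -/
import Mathlib

section
/- The functions Cos and Sinc are strictly decreasing on the interval (-∞, π²]. -/
noncomputable def RCos (ξ : ℝ) : ℝ := ∑' k : ℕ, (-ξ) ^ k / (Nat.factorial (2 * k))

noncomputable def RSinc (ξ : ℝ) : ℝ := ∑' k : ℕ, (-ξ) ^ k / (Nat.factorial (2 * k + 1))

lemma summable_aux (ξ : ℝ) (c : ℕ → ℕ) (hc : ∀ k, k ≤ c k) :
    Summable (fun k : ℕ => (-ξ) ^ k / (Nat.factorial (c k)) : ℕ → ℝ) := by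
  apply Summable.of_abs
  apply Summable.of_nonneg_of_le (fun k => abs_nonneg _) _ (Real.summable_pow_div_factorial |ξ|)
  intro k
  rw [abs_div, abs_pow, abs_neg, Nat.abs_cast _]
  apply div_le_div_of_nonneg_left (by positivity) (by positivity)
  exact_mod_cast Nat.factorial_le (hc k)

lemma anti_neg (c : ℕ → ℕ) (hc : ∀ k, k ≤ c k) {x y : ℝ} (hxy : x < y) (hy : y ≤ 0) :
    (∑' k : ℕ, (-y) ^ k / (Nat.factorial (c k)) : ℝ) <
      ∑' k : ℕ, (-x) ^ k / (Nat.factorial (c k)) := by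
  have hfy : (0:ℝ) ≤ -y := by linarith
  have hle : -y ≤ -x := by linarith
  refine Summable.tsum_lt_tsum (i := 1) (fun k => ?_) ?_ (summable_aux y c hc) (summable_aux x c hc)
  · gcongr
  · have h1 : (-y) ^ 1 < (-x) ^ 1 := by simpa using by linarith
    have : (0:ℝ) < (Nat.factorial (c 1)) := by exact_mod_cast Nat.factorial_pos _
    exact div_lt_div_of_pos_right h1 this

lemma RCos_eq (ξ : ℝ) (hξ : 0 ≤ ξ) : RCos ξ = Real.cos (Real.sqrt ξ) := by
  rw [Real.cos_eq_tsum, RCos]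
  congr 1; funext k
  rw [pow_mul, Real.sq_sqrt hξ, neg_pow ξ k, mul_div_assoc]

lemma RSinc_zero : RSinc 0 = 1 := by
  rw [RSinc]
  rw [tsum_eq_single 0]
  · norm_num
  · intro k hk
    simp [zero_pow hk]

lemma RSinc_eq (ξ : ℝ) (hξ : 0 < ξ) : RSinc ξ = Real.sin (Real.sqrt ξ) / Real.sqrt ξ := by
  have hs : Real.sqrt ξ ≠ 0 := ne_of_gt (Real.sqrt_pos.2 hξ)
  have : Real.sin (Real.sqrt ξ) = Real.sqrt ξ * RSinc ξ := by
    rw [Real.sin_eq_tsum, RSinc, ← tsum_mul_left]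
    congr 1; funext k
    rw [pow_succ, pow_mul, Real.sq_sqrt hξ.le, neg_pow ξ k]
    ring
  rw [this]
  field_simp

lemma sinc_anti {a b : ℝ} (ha : 0 < a) (hab : a < b) (hb : b ≤ Real.pi) :
    Real.sin b / b < Real.sin a / a := by
  have h : StrictAntiOn (fun t => Real.sin t / t) (Set.Ioc 0 Real.pi) := by
    apply strictAntiOn_of_deriv_neg (convex_Ioc 0 Real.pi)
    · exact ContinuousOn.div Real.continuous_sin.continuousOn continuousOn_id
        (fun t ht => ne_of_gt ht.1)
    · intro t ht
      rw [interior_Ioc] at ht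
      have ht0 := ht.1
      have hd : HasDerivAt (fun t => Real.sin t / t)
          ((Real.cos t * t - Real.sin t * 1) / t ^ 2) t :=
        (Real.hasDerivAt_sin t).div (hasDerivAt_id t) (ne_of_gt ht0)
      rw [hd.deriv]
      apply div_neg_of_neg_of_pos _ (by positivity)
      rw [sub_neg, mul_one]
      rcases lt_or_ge t (Real.pi / 2) with h2 | h2
      · have hcos : 0 < Real.cos t := Real.cos_pos_of_mem_Ioo ⟨by linarith [Real.pi_pos], h2⟩
        have := Real.lt_tan ht0 h2
        rw [Real.tan_eq_sin_div_cos, lt_div_iff₀ hcos] at this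
        linarith
      · have hcos : Real.cos t ≤ 0 :=
          Real.cos_nonpos_of_pi_div_two_le_of_le h2 (by linarith [Real.pi_pos, ht.2])
        have hsin : 0 < Real.sin t := Real.sin_pos_of_pos_of_lt_pi ht0 ht.2
        nlinarith
  exact h ⟨ha, hab.le.trans hb⟩ ⟨ha.trans hab, hb⟩ hab

theorem stmt_5 :
    StrictAntiOn RCos (Set.Iic (Real.pi ^ 2)) ∧ StrictAntiOn RSinc (Set.Iic (Real.pi ^ 2)) := by
  have hπ := Real.pi_pos
  -- positive-side facts
  have sqrt_mem : ∀ y : ℝ, 0 ≤ y → y ≤ Real.pi ^ 2 → Real.sqrt y ≤ Real.pi := by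
    intro y hy0 hy
    calc Real.sqrt y ≤ Real.sqrt (Real.pi ^ 2) := Real.sqrt_le_sqrt hy
    _ = Real.pi := Real.sqrt_sq hπ.le
  have cos_pos : ∀ x y : ℝ, 0 ≤ x → x < y → y ≤ Real.pi ^ 2 → RCos y < RCos x := by
    intro x y hx0 hxy hy
    have hy0 : 0 ≤ y := hx0.trans hxy.le
    rw [RCos_eq x hx0, RCos_eq y hy0]
    exact Real.strictAntiOn_cos ⟨Real.sqrt_nonneg x, (Real.sqrt_le_sqrt hxy.le).trans (sqrt_mem y hy0 hy)⟩
      ⟨Real.sqrt_nonneg y, sqrt_mem y hy0 hy⟩ (Real.sqrt_lt_sqrt hx0 hxy)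
  have sinc_pos : ∀ x y : ℝ, 0 ≤ x → x < y → y ≤ Real.pi ^ 2 → RSinc y < RSinc x := by
    intro x y hx0 hxy hy
    have hy0 : 0 < y := lt_of_le_of_lt hx0 hxy
    have hb : 0 < Real.sqrt y := Real.sqrt_pos.2 hy0
    rw [RSinc_eq y hy0]
    rcases eq_or_lt_of_le hx0 with h | h
    · rw [← h, RSinc_zero]
      rw [div_lt_one hb]
      exact Real.sin_lt hb
    · rw [RSinc_eq x h]
      exact sinc_anti (Real.sqrt_pos.2 h) (Real.sqrt_lt_sqrt h.le hxy) (sqrt_mem y hy0.le hy)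
  have glue : ∀ f : ℝ → ℝ,
      (∀ x y : ℝ, x < y → y ≤ 0 → f y < f x) →
      (∀ x y : ℝ, 0 ≤ x → x < y → y ≤ Real.pi ^ 2 → f y < f x) →
      StrictAntiOn f (Set.Iic (Real.pi ^ 2)) := by
    intro f hneg hpos x hx y hy hxy
    rcases le_or_gt y 0 with h | h
    · exact hneg x y hxy h
    · rcases le_or_gt 0 x with h2 | h2
      · exact hpos x y h2 hxy hy
      · exact lt_trans (hpos 0 y le_rfl h hy) (hneg x 0 h2 le_rfl)
  constructor
  · exact glue RCos (fun x y hxy hy => anti_neg (fun k => 2 * k) (fun k => by show k ≤ 2*k; omega) hxy hy) cos_pos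
  · exact glue RSinc (fun x y hxy hy => anti_neg (fun k => 2 * k + 1) (fun k => by show k ≤ 2*k+1; omega) hxy hy) sinc_pos
end

section
/- Let O ⊂ ℂ be an open set closed under negation (z ∈ O implies -z ∈ O), let Õ = {z² : z ∈ O}, and let f be a holomorphic function on O with f(-z) = f(z) for all z ∈ O. Then Õ is open and there exists a unique holomorphic function f̃ on Õ such that f(z) = f̃(z²) for all z ∈ O. -/
open Topology Filter


theorem stmt_9 (O : Set ℂ) (hO : IsOpen O) (hsym : ∀ z ∈ O, -z ∈ O)
    (f : ℂ → ℂ) (hf : DifferentiableOn ℂ f O) (heven : ∀ z ∈ O, f (-z) = f z) :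
    IsOpen ((fun z : ℂ => z ^ 2) '' O) ∧
    ∃ ftilde : ℂ → ℂ,
      (DifferentiableOn ℂ ftilde ((fun z : ℂ => z ^ 2) '' O) ∧
        ∀ z ∈ O, f z = ftilde (z ^ 2)) ∧
      ∀ g : ℂ → ℂ,
        (DifferentiableOn ℂ g ((fun z : ℂ => z ^ 2) '' O) ∧ ∀ z ∈ O, f z = g (z ^ 2)) →
        Set.EqOn g ftilde ((fun z : ℂ => z ^ 2) '' O) := by
  classical
  have hmemiff : ∀ w : ℂ, w ∈ (fun z : ℂ => z ^ 2) '' O ↔ ∃ z, z ∈ O ∧ z ^ 2 = w := by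
    intro w; simp [Set.mem_image]
  -- local square-root branch facts
  have hbranch : ∀ z₀ : ℂ, z₀ ≠ 0 →
      ∃ s : ℂ → ℂ, s (z₀ ^ 2) = z₀ ∧ (∀ w : ℂ, w ≠ 0 → (s w) ^ 2 = w) ∧
        DifferentiableAt ℂ s (z₀ ^ 2) := by
    intro z₀ h0
    have hw0 : z₀ ^ 2 ≠ 0 := pow_ne_zero _ h0
    refine ⟨fun w => z₀ * Complex.exp (Complex.log (w / z₀ ^ 2) / 2), ?_, ?_, ?_⟩
    · simp [div_self hw0, Complex.log_one]
    · intro w hw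
      have hne : w / z₀ ^ 2 ≠ 0 := div_ne_zero hw hw0
      have : Complex.exp (Complex.log (w / z₀ ^ 2) / 2) ^ 2
          = Complex.exp (Complex.log (w / z₀ ^ 2)) := by
        rw [← Complex.exp_nat_mul]; ring_nf
      rw [mul_pow, this, Complex.exp_log hne]
      field_simp
    · have h1 : DifferentiableAt ℂ (fun w : ℂ => Complex.log (w / z₀ ^ 2) / 2) (z₀ ^ 2) := by
        apply DifferentiableAt.div_const
        have hmem : (z₀ ^ 2) / z₀ ^ 2 ∈ Complex.slitPlane := by
          rw [div_self hw0]; exact Complex.one_mem_slitPlane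
        exact (differentiableAt_id.div_const _).clog hmem
      exact (h1.cexp).const_mul _
  -- openness
  have himage : ∀ w₀ ∈ (fun z : ℂ => z ^ 2) '' O, (fun z : ℂ => z ^ 2) '' O ∈ 𝓝 w₀ := by
    rintro w₀ ⟨z₀, hz₀, rfl⟩
    by_cases h0 : z₀ = 0
    · subst h0
      obtain ⟨ε, hε, hball⟩ := Metric.isOpen_iff.1 hO 0 hz₀
      refine Filter.mem_of_superset (Metric.ball_mem_nhds _ (by positivity : (0:ℝ) < ε ^ 2)) ?_
      intro w hw
      rcases eq_or_ne w 0 with rfl | hwne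
      · exact ⟨0, hz₀, by simp⟩
      · refine ⟨Complex.exp (Complex.log w / 2), ?_, ?_⟩
        · apply hball
          have hsq : Complex.exp (Complex.log w / 2) ^ 2 = w := by
            rw [← Complex.exp_nat_mul]; ring_nf
            rw [Complex.exp_log hwne]
          have hn : ‖Complex.exp (Complex.log w / 2)‖ ^ 2 = ‖w‖ := by
            rw [← norm_pow, hsq]
          have hwlt : ‖w‖ < ε ^ 2 := by
            simpa [Metric.mem_ball, Complex.dist_eq] using hw
          have : ‖Complex.exp (Complex.log w / 2)‖ ^ 2 < ε ^ 2 := by rw [hn]; exact hwlt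
          have hlt : ‖Complex.exp (Complex.log w / 2)‖ < ε :=
            lt_of_pow_lt_pow_left₀ 2 hε.le this
          simpa [Metric.mem_ball, Complex.dist_eq] using hlt
        · show Complex.exp (Complex.log w / 2) ^ 2 = w
          rw [← Complex.exp_nat_mul]; ring_nf
          rw [Complex.exp_log hwne]
    · obtain ⟨s, hs1, hs2, hs3⟩ := hbranch z₀ h0
      have hw0 : (z₀ : ℂ) ^ 2 ≠ 0 := pow_ne_zero _ h0
      have hev1 : ∀ᶠ w in 𝓝 (z₀ ^ 2), w ≠ 0 := eventually_ne_nhds hw0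
      have hev2 : ∀ᶠ w in 𝓝 (z₀ ^ 2), s w ∈ O := by
        apply hs3.continuousAt.eventually_mem
        rw [hs1]; exact hO.mem_nhds hz₀
      have : ∀ᶠ w in 𝓝 (z₀ ^ 2), w ∈ (fun z : ℂ => z ^ 2) '' O := by
        filter_upwards [hev1, hev2] with w h1 h2
        exact ⟨s w, h2, hs2 w h1⟩
      exact this
  have hopen : IsOpen ((fun z : ℂ => z ^ 2) '' O) := by
    rw [isOpen_iff_mem_nhds]; exact himage
  -- the choice function
  obtain ⟨C, hC, hCnorm⟩ :
      ∃ C : ℂ → ℂ, (∀ w : ℂ, (∃ z, z ∈ O ∧ z ^ 2 = w) → C w ∈ O ∧ C w ^ 2 = w) ∧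
        ∀ w : ℂ, ‖C w‖ ≤ Real.sqrt ‖w‖ := by
    refine ⟨fun w => if h : ∃ z, z ∈ O ∧ z ^ 2 = w then h.choose else 0, ?_, ?_⟩
    · intro w h
      simp only [dif_pos h]
      exact ⟨h.choose_spec.1, h.choose_spec.2⟩
    · intro w
      by_cases h : ∃ z, z ∈ O ∧ z ^ 2 = w
      · simp only [dif_pos h]
        rw [Real.le_sqrt (norm_nonneg _) (norm_nonneg _)]
        rw [← norm_pow, h.choose_spec.2]
      · simp only [dif_neg h, norm_zero]
        exact Real.sqrt_nonneg _
  set F : ℂ → ℂ := fun w => f (C w) with hFdef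
  -- key algebraic lemma: F inverts the squaring
  have hA : ∀ z ∈ O, f z = F (z ^ 2) := by
    intro z hz
    obtain ⟨hmem, hsq⟩ := hC (z ^ 2) ⟨z, hz, rfl⟩
    have hcases : C (z ^ 2) = z ∨ C (z ^ 2) = -z := by
      apply mul_self_eq_mul_self_iff.1
      rw [← pow_two, ← pow_two]; exact hsq
    rcases hcases with h | h
    · simp [hFdef, h]
    · simp only [hFdef, h]
      exact (heven z hz).symm
  -- differentiability at nonzero points of the image
  have hB : ∀ w₀ ∈ (fun z : ℂ => z ^ 2) '' O, w₀ ≠ 0 → DifferentiableAt ℂ F w₀ := by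
    rintro w₀ ⟨z₀, hz₀, rfl⟩ hw0
    have h0 : z₀ ≠ 0 := by
      intro h; exact hw0 (by simp [h])
    obtain ⟨s, hs1, hs2, hs3⟩ := hbranch z₀ h0
    have hev1 : ∀ᶠ w in 𝓝 (z₀ ^ 2), w ≠ 0 := eventually_ne_nhds hw0
    have hev2 : ∀ᶠ w in 𝓝 (z₀ ^ 2), s w ∈ O := by
      apply hs3.continuousAt.eventually_mem
      rw [hs1]; exact hO.mem_nhds hz₀
    have hev3 : ∀ᶠ w in 𝓝 (z₀ ^ 2), w ∈ (fun z : ℂ => z ^ 2) '' O :=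
      (hopen.eventually_mem ⟨z₀, hz₀, rfl⟩)
    have heq : ∀ᶠ w in 𝓝 (z₀ ^ 2), F w = (f ∘ s) w := by
      filter_upwards [hev1, hev2, hev3] with w h1 h2 h3
      obtain ⟨hCO, hCsq⟩ := hC w ((hmemiff w).1 h3)
      have hcases : C w = s w ∨ C w = -(s w) := by
        apply mul_self_eq_mul_self_iff.1
        rw [← pow_two, ← pow_two, hCsq, hs2 w h1]
      rcases hcases with h | h
      · simp [hFdef, h, Function.comp]
      · simp only [hFdef, h, Function.comp]
        exact heven (s w) h2
    have hfs : DifferentiableAt ℂ (f ∘ s) (z₀ ^ 2) := by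
      apply DifferentiableAt.comp
      · rw [hs1]; exact hf.differentiableAt (hO.mem_nhds hz₀)
      · exact hs3
    exact (Filter.EventuallyEq.differentiableAt_iff heq).2 hfs
  -- differentiability at 0 when 0 is in the image
  have hB0 : (0 : ℂ) ∈ (fun z : ℂ => z ^ 2) '' O → DifferentiableAt ℂ F 0 := by
    intro h0im
    have h0O : (0 : ℂ) ∈ O := by
      obtain ⟨z, hz, hzsq⟩ := (hmemiff 0).1 h0im
      have : z = 0 := by
        have := pow_eq_zero_iff (n := 2) (by norm_num) |>.1 hzsq
        exact this
      rwa [this] at hz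
    have hC0 : C 0 = 0 := by
      obtain ⟨-, hsq⟩ := hC 0 ⟨0, h0O, by simp⟩
      exact pow_eq_zero_iff (n := 2) (by norm_num) |>.1 hsq
    have hF0 : F 0 = f 0 := by simp [hFdef, hC0]
    have hCtend : Filter.Tendsto C (𝓝 0) (𝓝 0) := by
      rw [tendsto_zero_iff_norm_tendsto_zero]
      apply squeeze_zero (fun w => norm_nonneg _) hCnorm
      have h1 : Filter.Tendsto (fun w : ℂ => ‖w‖) (𝓝 0) (𝓝 0) := tendsto_norm_zero
      have h2 : Filter.Tendsto Real.sqrt (𝓝 0) (𝓝 0) := by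
        simpa [Real.sqrt_zero] using (Real.continuous_sqrt.tendsto 0)
      exact h2.comp h1
    have hfc : ContinuousAt f 0 := (hf.differentiableAt (hO.mem_nhds h0O)).continuousAt
    have hcont : ContinuousAt F 0 := by
      rw [ContinuousAt, hF0]
      exact hfc.tendsto.comp hCtend
    have hd : ∀ᶠ w in 𝓝[≠] (0 : ℂ), DifferentiableAt ℂ F w := by
      have him : ∀ᶠ w in 𝓝[≠] (0 : ℂ), w ∈ (fun z : ℂ => z ^ 2) '' O :=
        Filter.Eventually.filter_mono nhdsWithin_le_nhds (hopen.eventually_mem h0im)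
      filter_upwards [him, self_mem_nhdsWithin] with w h1 h2
      exact hB w h1 h2
    exact
      (Complex.analyticAt_of_differentiable_on_punctured_nhds_of_continuousAt hd
        hcont).differentiableAt
  refine ⟨hopen, F, ⟨?_, hA⟩, ?_⟩
  · intro w hw
    rcases eq_or_ne w 0 with rfl | hne
    · exact (hB0 hw).differentiableWithinAt
    · exact (hB w hw hne).differentiableWithinAt
  · rintro g ⟨-, hg⟩ w ⟨z, hz, rfl⟩
    show g (z ^ 2) = F (z ^ 2)
    rw [← hg z hz]
    exact hA z hz
end

section
/- Let κ = κ' + iκ'' be a nonzero complex number with |κ'| < 1, and let f(r) = c₁ r^{1/2+κ} + c₂ r^{1/2-κ} for r > 0 with (c₁,c₂) ≠ (0,0). Then f is not square-integrable on (0,∞), i.e., ∫₀^∞ |f(r)|² dr = ∞. -/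
open MeasureTheory Set Filter

private lemma aux_norm_exp' (z : ℂ) (x : ℝ) :
    ‖Complex.exp (z * x)‖ = Real.exp (z.re * x) := by
  rw [Complex.norm_exp]
  congr 1
  simp

private lemma aux_norm_exp (z : ℂ) (r : ℝ) (hr : 0 < r) :
    ‖Complex.exp (z * Real.log r)‖ = r ^ z.re := by
  rw [Complex.norm_exp, Real.rpow_def_of_pos hr]
  simp [mul_comm]

/-- An integrable function on `(0,∞)` cannot be bounded below by a positive constant
on a tail `(R,∞)`. -/
private lemma aux_not_int (F : ℝ → ℝ) (ε R : ℝ) (hε : 0 < ε)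
    (hF : ∀ r, R < r → ε ≤ F r) (hI : IntegrableOn F (Set.Ioi 0)) : False := by
  have h1 := hI.measure_ge_lt_top hε
  have h2 : Ioi (max R 0) ⊆ {x | ε ≤ F x} := fun x hx =>
    hF x (lt_of_le_of_lt (le_max_left _ _) hx)
  have h3 : (volume.restrict (Ioi (0:ℝ))) (Ioi (max R 0)) = ⊤ := by
    rw [Measure.restrict_apply measurableSet_Ioi,
      Set.inter_eq_left.mpr (Set.Ioi_subset_Ioi (le_max_right _ _)), Real.volume_Ioi]
  have h4 := (measure_mono h2).trans_lt h1
  rw [h3] at h4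
  exact lt_irrefl _ h4

/-- The case `0 < κ.re < 1`. -/
private lemma aux_pos_case (κ : ℂ) (hκ1 : κ.re < 1) (hκ0 : 0 < κ.re) (c₁ c₂ : ℂ)
    (hc : ¬(c₁ = 0 ∧ c₂ = 0)) :
    ¬ IntegrableOn
      (fun r : ℝ =>
        ‖c₁ * Complex.exp ((1 / 2 + κ) * Real.log r) +
          c₂ * Complex.exp ((1 / 2 - κ) * Real.log r)‖ ^ 2)
      (Set.Ioi (0 : ℝ)) := by
  intro hI
  by_cases h1 : c₁ = 0
  · -- pure power `‖c₂‖² r^{1-2κ.re}`, exponent `> -1`, diverges at `∞`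
    have h2 : c₂ ≠ 0 := fun h => hc ⟨h1, h⟩
    have hI1 : IntegrableOn
        (fun r : ℝ =>
          ‖c₁ * Complex.exp ((1 / 2 + κ) * Real.log r) +
            c₂ * Complex.exp ((1 / 2 - κ) * Real.log r)‖ ^ 2) (Ioi 1) :=
      hI.mono_set (Ioi_subset_Ioi zero_le_one)
    have heq : EqOn
        (fun r : ℝ =>
          ‖c₁ * Complex.exp ((1 / 2 + κ) * Real.log r) +
            c₂ * Complex.exp ((1 / 2 - κ) * Real.log r)‖ ^ 2)
        (fun r : ℝ => ‖c₂‖ ^ 2 * r ^ (1 - 2 * κ.re)) (Ioi 1) := by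
      intro r hr
      have hr0 : (0:ℝ) < r := lt_trans zero_lt_one hr
      simp only [h1, zero_mul, zero_add, norm_mul, mul_pow]
      rw [aux_norm_exp _ _ hr0]
      have hre : ((1:ℂ)/2 - κ).re = 1/2 - κ.re := by simp
      have hexp2 : (1/2 - κ.re) * ((2:ℕ):ℝ) = 1 - 2 * κ.re := by push_cast; ring
      rw [hre, ← Real.rpow_natCast (r ^ (1/2 - κ.re)) 2, ← Real.rpow_mul hr0.le, hexp2]
    have hI2 : IntegrableOn (fun r : ℝ => ‖c₂‖ ^ 2 * r ^ (1 - 2 * κ.re)) (Ioi 1) :=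
      hI1.congr_fun heq measurableSet_Ioi
    have hc2 : (0:ℝ) < ‖c₂‖ ^ 2 := pow_pos (norm_pos_iff.mpr h2) 2
    have hI3 : IntegrableOn (fun r : ℝ => r ^ (1 - 2 * κ.re)) (Ioi 1) := by
      have h4 : IntegrableOn (fun r : ℝ => (‖c₂‖ ^ 2)⁻¹ * (‖c₂‖ ^ 2 * r ^ (1 - 2 * κ.re)))
          (Ioi 1) := hI2.const_mul ((‖c₂‖ ^ 2)⁻¹)
      refine IntegrableOn.congr_fun h4 (fun r _ => ?_) measurableSet_Ioi
      rw [inv_mul_cancel_left₀ hc2.ne']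
    rw [integrableOn_Ioi_rpow_iff zero_lt_one] at hI3
    linarith
  · -- dominant term: the function tends to `∞`
    have hc1 : (0:ℝ) < ‖c₁‖ := norm_pos_iff.mpr h1
    have t1 : Tendsto (fun r : ℝ => r ^ ((1:ℝ)/2)) atTop atTop :=
      tendsto_rpow_atTop (by norm_num)
    have t2 : Tendsto (fun r : ℝ => ‖c₁‖ * r ^ κ.re - ‖c₂‖) atTop atTop := by
      have := (tendsto_rpow_atTop hκ0).const_mul_atTop hc1
      simpa [sub_eq_add_neg] using tendsto_atTop_add_const_right atTop (-‖c₂‖) this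
    have t3 : Tendsto
        (fun r : ℝ => r ^ ((1:ℝ)/2) * (‖c₁‖ * r ^ κ.re - ‖c₂‖)) atTop atTop :=
      t1.atTop_mul_atTop₀ t2
    obtain ⟨R, hR⟩ := eventually_atTop.mp
      ((t3.eventually_ge_atTop 1).and (eventually_ge_atTop (1:ℝ)))
    refine aux_not_int _ 1 R one_pos (fun r hr => ?_) hI
    obtain ⟨hg1, hr1⟩ := hR r hr.le
    have hr0 : (0:ℝ) < r := lt_of_lt_of_le zero_lt_one hr1
    -- lower bound the norm
    have hA : ‖c₁ * Complex.exp ((1 / 2 + κ) * Real.log r)‖ = ‖c₁‖ * r ^ (1/2 + κ.re) := by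
      rw [norm_mul, aux_norm_exp _ _ hr0]
      norm_num
    have hB : ‖c₂ * Complex.exp ((1 / 2 - κ) * Real.log r)‖ ≤ ‖c₂‖ * r ^ ((1:ℝ)/2) := by
      rw [norm_mul, aux_norm_exp _ _ hr0]
      have hre : ((1:ℂ)/2 - κ).re = 1/2 - κ.re := by simp
      rw [hre]
      exact mul_le_mul_of_nonneg_left
        (Real.rpow_le_rpow_of_exponent_le hr1 (by linarith)) (norm_nonneg _)
    have hsplit : ‖c₁‖ * r ^ (1/2 + κ.re) = ‖c₁‖ * (r ^ ((1:ℝ)/2) * r ^ κ.re) := by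
      rw [← Real.rpow_add hr0]
    have htri : ‖c₁‖ * r ^ (1/2 + κ.re) - ‖c₂‖ * r ^ ((1:ℝ)/2) ≤
        ‖c₁ * Complex.exp ((1 / 2 + κ) * Real.log r) +
          c₂ * Complex.exp ((1 / 2 - κ) * Real.log r)‖ := by
      have h5 := norm_sub_norm_le (c₁ * Complex.exp ((1 / 2 + κ) * Real.log r))
        (-(c₂ * Complex.exp ((1 / 2 - κ) * Real.log r)))
      rw [sub_neg_eq_add, norm_neg, hA] at h5
      linarith
    have hnorm : 1 ≤ ‖c₁ * Complex.exp ((1 / 2 + κ) * Real.log r) +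
        c₂ * Complex.exp ((1 / 2 - κ) * Real.log r)‖ := by
      have : r ^ ((1:ℝ)/2) * (‖c₁‖ * r ^ κ.re - ‖c₂‖) ≤
          ‖c₁‖ * r ^ (1/2 + κ.re) - ‖c₂‖ * r ^ ((1:ℝ)/2) := by
        rw [hsplit]; ring_nf; linarith [le_refl (0:ℝ)]
      linarith
    calc (1:ℝ) = 1 ^ 2 := by norm_num
    _ ≤ _ := by
      apply pow_le_pow_left₀ zero_le_one hnorm

theorem stmt_11 (κ : ℂ) (hκ : κ ≠ 0) (hκ' : |κ.re| < 1) (c₁ c₂ : ℂ)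
    (hc : ¬(c₁ = 0 ∧ c₂ = 0)) :
    ¬ IntegrableOn
      (fun r : ℝ =>
        ‖c₁ * Complex.exp ((1 / 2 + κ) * Real.log r) +
          c₂ * Complex.exp ((1 / 2 - κ) * Real.log r)‖ ^ 2)
      (Set.Ioi (0 : ℝ)) := by
  obtain ⟨hl, hu⟩ := abs_lt.mp hκ'
  rcases lt_trichotomy κ.re 0 with hneg | hzero | hpos
  · -- apply the positive case to `-κ` with coefficients swapped
    have h := aux_pos_case (-κ) (by simp; linarith) (by simp; linarith) c₂ c₁
      (fun h => hc ⟨h.2, h.1⟩)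
    have hfe : (fun r : ℝ =>
        ‖c₂ * Complex.exp ((1 / 2 + -κ) * Real.log r) +
          c₁ * Complex.exp ((1 / 2 - -κ) * Real.log r)‖ ^ 2) =
        (fun r : ℝ =>
        ‖c₁ * Complex.exp ((1 / 2 + κ) * Real.log r) +
          c₂ * Complex.exp ((1 / 2 - κ) * Real.log r)‖ ^ 2) := by
      funext r
      rw [show ((1:ℂ)/2 + -κ) = 1/2 - κ by ring, show ((1:ℂ)/2 - -κ) = 1/2 + κ by ring,
        add_comm (c₂ * _)]
    rw [hfe] at h
    exact h
  · -- κ purely imaginary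
    intro hI
    set F : ℝ → ℝ := fun r : ℝ =>
        ‖c₁ * Complex.exp ((1 / 2 + κ) * Real.log r) +
          c₂ * Complex.exp ((1 / 2 - κ) * Real.log r)‖ ^ 2 with hF
    have hβ : κ.im ≠ 0 := by
      intro h
      exact hκ (Complex.ext hzero h)
    set s : ℝ := Real.pi / (2 * κ.im) with hs
    set a : ℝ := Real.exp s with ha
    have ha0 : 0 < a := Real.exp_pos s
    have hI2 : IntegrableOn (fun r : ℝ => F (a * r)) (Ioi 0) := by
      rw [integrableOn_Ioi_comp_mul_left_iff F 0 ha0, mul_zero]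
      exact hI
    set C : ℝ := ‖c₁‖ ^ 2 + ‖c₂‖ ^ 2 with hC
    have hCpos : 0 < C := by
      rcases not_and_or.mp hc with h | h
      · have h' : 0 < ‖c₁‖ := norm_pos_iff.mpr h
        have h'' : (0:ℝ) ≤ ‖c₂‖ := norm_nonneg _
        rw [hC]; nlinarith
      · have h' : 0 < ‖c₂‖ := norm_pos_iff.mpr h
        have h'' : (0:ℝ) ≤ ‖c₁‖ := norm_nonneg _
        rw [hC]; nlinarith
    -- exp(κ s) = I
    have hexpI : Complex.exp (κ * s) = Complex.I := by
      have hκI : κ * (s:ℂ) = (Real.pi/2 : ℝ) * Complex.I := by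
        have hκeq : κ = (κ.im : ℂ) * Complex.I := by
          rw [← Complex.re_add_im κ, hzero]
          simp
        have hβ' : (κ.im : ℂ) ≠ 0 := Complex.ofReal_ne_zero.mpr hβ
        rw [hκeq, hs]
        push_cast
        field_simp
      rw [hκI, Complex.exp_mul_I, ← Complex.ofReal_cos, ← Complex.ofReal_sin,
        Real.cos_pi_div_two, Real.sin_pi_div_two]
      simp
    -- key pointwise identity
    have hkey : ∀ r : ℝ, 0 < r → F r + a⁻¹ * F (a * r) = 2 * C * r := by
      intro r hr
      set L : ℝ := Real.log r with hL
      set u : ℂ := c₁ * Complex.exp (κ * L) with hu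
      set v : ℂ := c₂ * Complex.exp (-κ * L) with hv
      have hlog : Real.log (a * r) = s + L := by
        rw [Real.log_mul (ne_of_gt ha0) (ne_of_gt hr), ha, Real.log_exp]
      have e1 : c₁ * Complex.exp ((1 / 2 + κ) * (L:ℂ)) +
          c₂ * Complex.exp ((1 / 2 - κ) * (L:ℂ)) =
          Complex.exp ((1/2 : ℂ) * L) * (u + v) := by
        rw [show ((1:ℂ)/2 + κ) * (L:ℂ) = (1/2:ℂ) * L + κ * L by ring,
          show ((1:ℂ)/2 - κ) * (L:ℂ) = (1/2:ℂ) * L + (-κ) * L by ring,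
          Complex.exp_add, Complex.exp_add, hu, hv]
        ring
      have e2 : c₁ * Complex.exp ((1 / 2 + κ) * ((Real.log (a*r)):ℂ)) +
          c₂ * Complex.exp ((1 / 2 - κ) * ((Real.log (a*r)):ℂ)) =
          Complex.exp ((1/2 : ℂ) * ((s:ℝ) + L : ℝ)) * (Complex.I * (u - v)) := by
        rw [hlog]
        push_cast
        rw [show ((1:ℂ)/2 + κ) * ((s:ℂ) + (L:ℂ)) =
            (1/2:ℂ) * ((s:ℂ) + (L:ℂ)) + (κ * s + κ * L) by ring,
          show ((1:ℂ)/2 - κ) * ((s:ℂ) + (L:ℂ)) =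
            (1/2:ℂ) * ((s:ℂ) + (L:ℂ)) + (-(κ * s) + (-κ) * L) by ring,
          Complex.exp_add, Complex.exp_add, Complex.exp_add, Complex.exp_add,
          Complex.exp_neg, hexpI, Complex.inv_I, hu, hv]
        ring
      have hnu : ‖u‖ = ‖c₁‖ := by
        rw [hu, norm_mul, aux_norm_exp _ _ hr, hzero, Real.rpow_zero, mul_one]
      have hnv : ‖v‖ = ‖c₂‖ := by
        rw [hv, norm_mul, aux_norm_exp _ _ hr]
        simp [hzero]
      have h12 : ((1:ℂ)/2).re = 1/2 := by norm_num
      have hw1 : ‖Complex.exp ((1/2 : ℂ) * (L:ℂ))‖ ^ 2 = r := by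
        rw [aux_norm_exp' _ _, h12, ← Real.exp_nat_mul,
          show ((2:ℕ):ℝ) * (1/2 * L) = L by push_cast; ring, hL, Real.exp_log hr]
      have hw2 : ‖Complex.exp ((1/2 : ℂ) * ((s + L : ℝ):ℂ))‖ ^ 2 = a * r := by
        rw [aux_norm_exp' _ _, h12, ← Real.exp_nat_mul,
          show ((2:ℕ):ℝ) * (1/2 * (s + L)) = s + L by push_cast; ring,
          Real.exp_add, ha, hL, Real.exp_log hr]
      have hpar : ‖u + v‖ ^ 2 + ‖u - v‖ ^ 2 = 2 * C := by
        have := parallelogram_law_with_norm ℝ u v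
        rw [hnu, hnv] at this
        rw [hC]
        nlinarith [this]
      have hFr : F r = r * ‖u + v‖ ^ 2 := by
        rw [hF]
        simp only
        rw [e1, norm_mul, mul_pow, hw1]
      have hFar : F (a * r) = a * (r * ‖u - v‖ ^ 2) := by
        rw [hF]
        simp only
        rw [e2, norm_mul, mul_pow, hw2, norm_mul, Complex.norm_I, one_mul]
        ring
      rw [hFr, hFar, inv_mul_cancel_left₀ ha0.ne', ← mul_add, hpar]
      ring
    -- contradiction: the sum is integrable but equals 2Cr
    have hI3 : IntegrableOn (fun r : ℝ => F r + a⁻¹ * F (a * r)) (Ioi 0) :=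
      hI.add (hI2.const_mul a⁻¹)
    refine aux_not_int _ (2*C) 1 (by linarith) (fun r hr => ?_) hI3
    have hr0 : (0:ℝ) < r := lt_trans zero_lt_one hr
    show 2*C ≤ F r + a⁻¹ * F (a * r)
    rw [hkey r hr0]
    nlinarith
  · exact aux_pos_case κ hu hpos c₁ c₂ hc
end
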